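/- Let q be an odd prime and e ≥ 1, and let χ be an even Dirichlet character modulo q^e (i.e., χ(−1) = 1). Then there exists a Dirichlet character ψ modulo q^e such that ψ² = χ and the conductor of ψ equals the conductor of χ. -/

import Mathlib

/-!
STATEMENT 13: Let q be an odd prime and e ≥ 1, and let χ be an even Dirichlet
character modulo q^e (i.e. χ(−1) = 1).  Then there exists a Dirichlet character
ψ modulo q^e such that ψ² = χ and the conductor of ψ equals the conductor of χ.
-/

section lemmas

-- L0: square units mod odd prime power are ±1
lemma sq_unit_eq_pm_one {q f : ℕ} (hq : q.Prime) (hqodd : Odd q) (hf : 1 ≤ f)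
    (u : (ZMod (q ^ f))ˣ) (hu : u * u = 1) : u = 1 ∨ u = -1 := by
  have hne : NeZero (q ^ f) := ⟨pow_ne_zero _ hq.pos.ne'⟩
  set x : ZMod (q ^ f) := (u : ZMod (q ^ f)) with hx
  have hx2 : x * x = 1 := by
    rw [hx, ← Units.val_mul, hu, Units.val_one]
  -- lift to ℤ
  set a : ℤ := (x.val : ℤ) with ha
  have hax : (a : ZMod (q ^ f)) = x := by
    simp [ha, ZMod.natCast_val, ZMod.intCast_cast]
  have hdvd : ((q : ℤ) ^ f) ∣ (a - 1) * (a + 1) := by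
    have : (((a - 1) * (a + 1) : ℤ) : ZMod (q ^ f)) = 0 := by
      push_cast
      rw [hax]
      linear_combination hx2
    rwa [ZMod.intCast_zmod_eq_zero_iff_dvd, Nat.cast_pow] at this
  have hp : Prime (q : ℤ) := Nat.prime_iff_prime_int.mp hq
  have hnotboth : ¬ ((q:ℤ) ∣ (a - 1) ∧ (q:ℤ) ∣ (a + 1)) := by
    rintro ⟨h1, h2⟩
    have : (q:ℤ) ∣ 2 := by
      have := dvd_sub h2 h1
      simpa using this
    have : q ∣ 2 := Int.ofNat_dvd.mp (by exact_mod_cast this)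
    have h2 : q = 2 := ((Nat.prime_dvd_prime_iff_eq hq Nat.prime_two).mp this)
    rcases hqodd with ⟨k, hk⟩
    omega
  have key : ((q:ℤ)^f ∣ (a - 1)) ∨ ((q:ℤ)^f ∣ (a + 1)) := by
    by_cases h1 : (q:ℤ) ∣ (a - 1)
    · have h2 : ¬ (q:ℤ) ∣ (a + 1) := fun h => hnotboth ⟨h1, h⟩
      left
      have hcop : IsCoprime ((q:ℤ)^f) (a + 1) :=
        (IsCoprime.pow_left ((hp.coprime_iff_not_dvd).mpr h2))
      exact hcop.dvd_of_dvd_mul_right hdvd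
    · right
      have hcop : IsCoprime ((q:ℤ)^f) (a - 1) :=
        (IsCoprime.pow_left ((hp.coprime_iff_not_dvd).mpr h1))
      exact hcop.dvd_of_dvd_mul_left hdvd
  have : x = 1 ∨ x = -1 := by
    rcases key with h | h
    · left
      have : ((a - 1 : ℤ) : ZMod (q ^ f)) = 0 := by
        rw [ZMod.intCast_zmod_eq_zero_iff_dvd]; exact_mod_cast h
      push_cast at this
      rw [hax] at this
      linear_combination this
    · right
      have : ((a + 1 : ℤ) : ZMod (q ^ f)) = 0 := by
        rw [ZMod.intCast_zmod_eq_zero_iff_dvd]; exact_mod_cast h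
      push_cast at this
      rw [hax] at this
      linear_combination this
  rcases this with h | h
  · left; ext; rw [Units.val_one]; exact h
  · right; ext; rw [Units.val_neg, Units.val_one]; exact h

open MonoidHom in
lemma exists_sqrt_monoidHom {G : Type*} [CommGroup G] [Finite G] (τ : G) (hτ : τ ≠ 1)
    (hτ2 : τ * τ = 1) (hG : ∀ g : G, g * g = 1 → g = 1 ∨ g = τ)
    (u : G →* ℂˣ) (hu : u τ = 1) : ∃ h : G →* ℂˣ, h * h = u := by
  haveI : NeZero (Monoid.exponent G) := ⟨Monoid.exponent_ne_zero_of_finite⟩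
  haveI : NeZero ((Monoid.exponent G : ℂ)) := ⟨Nat.cast_ne_zero.mpr (NeZero.ne _)⟩
  obtain ⟨e⟩ := CommGroup.monoidHom_mulEquiv_of_hasEnoughRootsOfUnity G ℂ
  haveI : Finite (G →* ℂˣ) := Finite.of_equiv G e.symm.toEquiv
  let sq : (G →* ℂˣ) →* (G →* ℂˣ) := powMonoidHom 2
  let Ev : (G →* ℂˣ) →* ℂˣ := { toFun := fun ψ => ψ τ, map_one' := rfl, map_mul' := fun _ _ => rfl }
  have hRle : sq.range ≤ Ev.ker := by
    rintro x ⟨ψ, rfl⟩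
    show (ψ ^ 2) τ = 1
    rw [pow_two]
    show ψ τ * ψ τ = 1
    rw [← map_mul, hτ2, map_one]
  -- card of ker sq = 2
  have hKcard : Nat.card sq.ker = 2 := by
    have h1 : Nat.card sq.ker = Nat.card (sq.ker.map e.toMonoidHom) :=
      Nat.card_congr (e.subgroupMap sq.ker).toEquiv
    have h2 : ((sq.ker.map e.toMonoidHom : Subgroup G) : Set G) = {1, τ} := by
      ext g
      simp only [Subgroup.coe_map, Set.mem_image, SetLike.mem_coe, MonoidHom.mem_ker,
        Set.mem_insert_iff, Set.mem_singleton_iff]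
      constructor
      · rintro ⟨ψ, hψ, rfl⟩
        have : (e ψ) * (e ψ) = 1 := by
          rw [← map_mul, ← pow_two]
          have : sq ψ = 1 := hψ
          rw [show ψ ^ 2 = sq ψ from rfl, this, map_one]
        exact hG _ this
      · intro hg
        refine ⟨e.symm g, ?_, e.apply_symm_apply g⟩
        show (e.symm g) ^ 2 = 1
        have hg2 : g * g = 1 := by
          rcases hg with rfl | rfl
          · simp
          · exact hτ2
        rw [pow_two, ← map_mul, hg2, map_one]
    have h3 : Nat.card (sq.ker.map e.toMonoidHom) = 2 := by
      calc Nat.card (sq.ker.map e.toMonoidHom)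
          = ((sq.ker.map e.toMonoidHom : Subgroup G) : Set G).ncard := Nat.card_coe_set_eq _
        _ = ({1, τ} : Set G).ncard := by rw [h2]
        _ = 2 := Set.ncard_pair (Ne.symm hτ)
    rw [h1, h3]
  -- card identities
  have hDcard : Nat.card (G →* ℂˣ) = Nat.card sq.range * Nat.card sq.ker := by
    rw [Subgroup.card_eq_card_quotient_mul_card_subgroup sq.ker,
      Nat.card_congr (QuotientGroup.quotientKerEquivRange sq).toEquiv]
  have hDcard2 : Nat.card (G →* ℂˣ) = Nat.card Ev.range * Nat.card Ev.ker := by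
    rw [Subgroup.card_eq_card_quotient_mul_card_subgroup Ev.ker,
      Nat.card_congr (QuotientGroup.quotientKerEquivRange Ev).toEquiv]
  -- Ev.range has at least 2 elements
  obtain ⟨φ, hφ⟩ := CommGroup.exists_apply_ne_one_of_hasEnoughRootsOfUnity G ℂ hτ
  have hEvcard : 2 ≤ Nat.card Ev.range := by
    haveI : Finite Ev.range := by
      have hfin : ((Ev.range : Subgroup ℂˣ) : Set ℂˣ).Finite := by
        rw [MonoidHom.coe_range]; exact Set.finite_range _
      exact hfin.to_subtype
    have : Nontrivial Ev.range := by
      refine ⟨⟨1, one_mem _⟩, ⟨Ev φ, ⟨φ, rfl⟩⟩, ?_⟩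
      intro hcontra
      apply hφ
      have := congrArg Subtype.val hcontra
      exact (this.symm : Ev φ = 1)
    exact Finite.one_lt_card_iff_nontrivial.mpr this
  have hle2 : Nat.card Ev.ker ≤ Nat.card sq.range := by
    haveI : Nonempty Ev.ker := ⟨1⟩
    have hpos : 0 < Nat.card Ev.ker := Nat.card_pos
    nlinarith [hDcard, hDcard2, hKcard, hEvcard, hpos]
  have heq : sq.range = Ev.ker := Subgroup.eq_of_le_of_card_ge hRle hle2
  have humem : u ∈ Ev.ker := hu
  rw [← heq] at humem
  obtain ⟨h, hh⟩ := humem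
  exact ⟨h, by rw [← hh]; exact (pow_two h).symm⟩

lemma exists_sqrt_char {n q f : ℕ} (hq : q.Prime) (hqodd : Odd q) (hf : 1 ≤ f)
    (hn : n = q ^ f) (χ : DirichletCharacter ℂ n) (hχ : χ (-1) = 1) :
    ∃ ψ : DirichletCharacter ℂ n, ψ * ψ = χ := by
  subst hn
  haveI : NeZero (q ^ f) := ⟨pow_ne_zero _ hq.pos.ne'⟩
  have hq3 : 2 < q ^ f := by
    have h3 : 3 ≤ q := by
      have h2 := hq.two_le
      have hne : q ≠ 2 := by
        rintro rfl
        rcases hqodd with ⟨k, hk⟩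
        omega
      omega
    calc 2 < q := by omega
    _ = q ^ 1 := (pow_one q).symm
    _ ≤ q ^ f := Nat.pow_le_pow_right hq.pos hf
  have hτ : (-1 : (ZMod (q ^ f))ˣ) ≠ 1 := by
    intro h
    have := congrArg Units.val h
    rw [Units.val_neg, Units.val_one] at this
    haveI hfact : Fact (2 < q ^ f) := ⟨hq3⟩
    exact ZMod.neg_one_ne_one (n := q ^ f) this
  have hτ2 : (-1 : (ZMod (q ^ f))ˣ) * (-1) = 1 := by simp
  have hu : χ.toUnitHom (-1) = 1 := by
    ext
    rw [MulChar.coe_toUnitHom, Units.val_one, Units.coe_neg_one, hχ]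
  obtain ⟨h, hh⟩ := exists_sqrt_monoidHom (-1 : (ZMod (q ^ f))ˣ) hτ hτ2
    (fun g hg => sq_unit_eq_pm_one hq hqodd hf g hg) χ.toUnitHom hu
  refine ⟨MulChar.mulEquivToUnitHom.symm h, ?_⟩
  apply MulChar.mulEquivToUnitHom.injective
  rw [map_mul, MulEquiv.apply_symm_apply, hh]
  rfl

end lemmas

theorem square_root_of_even_character
    (q : ℕ) (hq : q.Prime) (hqodd : Odd q) (e : ℕ) (he : 1 ≤ e)
    (χ : DirichletCharacter ℂ (q ^ e)) (hχeven : χ (-1) = 1) :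
    ∃ ψ : DirichletCharacter ℂ (q ^ e),
      ψ * ψ = χ ∧ ψ.conductor = χ.conductor := by
  haveI : NeZero (q ^ e) := ⟨pow_ne_zero _ hq.pos.ne'⟩
  by_cases h1 : χ = 1
  · exact ⟨1, by rw [h1, mul_one], by rw [h1]⟩
  obtain ⟨hdvd, χ₀, hfac⟩ := DirichletCharacter.factorsThrough_conductor χ
  obtain ⟨f, hfle, hd⟩ := (Nat.dvd_prime_pow hq).mp hdvd
  have hf1 : 1 ≤ f := by
    rcases Nat.eq_zero_or_pos f with hf0 | hf0
    · exfalso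
      apply h1
      rw [DirichletCharacter.eq_one_iff_conductor_eq_one]
      rw [hd, hf0, pow_zero]
    · exact hf0
  -- χ₀ is even
  have hχ₀even : χ₀ (-1) = 1 := by
    have key := DirichletCharacter.changeLevel_eq_cast_of_dvd χ₀ hdvd
      (-1 : (ZMod (q ^ e))ˣ)
    rw [← hfac, Units.coe_neg_one, hχeven] at key
    have hcast : (ZMod.cast (-1 : ZMod (q ^ e)) : ZMod χ.conductor) = -1 := by
      rw [← ZMod.castHom_apply (h := hdvd), map_neg, map_one]
    rw [hcast] at key
    exact key.symm
  obtain ⟨ψ₀, hψ₀⟩ := exists_sqrt_char hq hqodd hf1 hd χ₀ hχ₀even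
  refine ⟨DirichletCharacter.changeLevel hdvd ψ₀, ?_, ?_⟩
  · rw [← map_mul, hψ₀, ← hfac]
  · apply le_antisymm
    · exact Nat.sInf_le ⟨hdvd, ψ₀, rfl⟩
    · obtain ⟨hdvd', ψ', hψ'⟩ :=
        DirichletCharacter.factorsThrough_conductor (DirichletCharacter.changeLevel hdvd ψ₀)
      refine Nat.sInf_le ⟨hdvd', ψ' * ψ', ?_⟩
      rw [map_mul, ← hψ', ← map_mul, hψ₀, ← hfac]
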